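/- Under the stated coupled-chain assumptions, for any k⋆ ≥ 1 the Rhee–Glynn estimator H = φ(X_{k⋆}) + Σ_{k=k⋆+1}^{τ−1} (φ(X_k) − φ(X̊_k)) (the sum taken to be zero when τ − 1 ≤ k⋆) is integrable and E[H] = π(φ). That is, the coupled-chain estimator is an unbiased estimator of the stationary expectation π(φ). -/

import Mathlib

open MeasureTheory ProbabilityTheory Filter
open scoped ENNReal

/-- Unbiasedness of the Rhee–Glynn coupled-chain estimator
`H = φ(X_{k⋆}) + Σ_{k=k⋆+1}^{τ−1} (φ(X_k) − φ(X̊_k))`: under the coupled-chain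
assumptions (shifted identical distribution, convergence of expectations to
`π(φ)`, geometric tails of the meeting time, faithfulness after meeting),
`H` is integrable with expectation `π(φ)`. -/
theorem rhee_glynn_estimator_unbiased
    {Ω : Type*} [MeasurableSpace Ω] (P : Measure Ω) [IsProbabilityMeasure P]
    {S : Type*} [MeasurableSpace S]
    (π : Measure S) [IsProbabilityMeasure π]
    (φ : S → ℝ) (hφm : Measurable φ) (hφb : ∃ C, ∀ s, |φ s| ≤ C)
    (X X' : ℕ → Ω → S)
    (hXm : ∀ k, Measurable (X k)) (hX'm : ∀ k, Measurable (X' k))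
    (hident : ∀ k, 1 ≤ k → IdentDistrib (X' k) (X (k - 1)) P P)
    (hconv : Tendsto (fun k => ∫ ω, φ (X k ω) ∂P) atTop (nhds (∫ s, φ s ∂π)))
    (τ : Ω → ℕ) (hτ : ∀ ω, τ ω = sInf {k | 1 ≤ k ∧ X k ω = X' k ω})
    (C ρ : ℝ) (hρ : ρ ∈ Set.Ioo (0 : ℝ) 1)
    (htail : ∀ k, P {ω | k < τ ω} ≤ ENNReal.ofReal (C * ρ ^ k))
    (hfaithful : ∀ᵐ ω ∂P, ∀ k, τ ω ≤ k → X k ω = X' k ω)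
    (kstar : ℕ) (hk : 1 ≤ kstar) :
    Integrable (fun ω => φ (X kstar ω) +
        ∑ k ∈ Finset.Ico (kstar + 1) (τ ω), (φ (X k ω) - φ (X' k ω))) P ∧
      ∫ ω, (φ (X kstar ω) +
        ∑ k ∈ Finset.Ico (kstar + 1) (τ ω), (φ (X k ω) - φ (X' k ω))) ∂P =
        ∫ s, φ s ∂π := by
  obtain ⟨M, hM⟩ := hφb
  set M' : ℝ := max M 0 with hM'def
  have hM' : ∀ s, |φ s| ≤ M' := fun s => (hM s).trans (le_max_left _ _)
  have hM'0 : 0 ≤ M' := le_max_right _ _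
  set C' : ℝ := max C 0 with hC'def
  have hC'0 : 0 ≤ C' := le_max_right _ _
  have hρ0 : (0 : ℝ) ≤ ρ := hρ.1.le
  have hρ1 : ρ < 1 := hρ.2
  -- The increments, reindexed by shifting by `kstar + 1`.
  set Δ : ℕ → Ω → ℝ := fun k ω => φ (X (kstar + 1 + k) ω) - φ (X' (kstar + 1 + k) ω)
    with hΔdef
  have hΔm : ∀ k, Measurable (Δ k) := fun k =>
    (hφm.comp (hXm _)).sub (hφm.comp (hX'm _))
  have hΔbd : ∀ k ω, ‖Δ k ω‖ ≤ 2 * M' := by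
    intro k ω
    have := hM' (X (kstar + 1 + k) ω)
    have := hM' (X' (kstar + 1 + k) ω)
    simp only [hΔdef, Real.norm_eq_abs]
    calc |φ (X (kstar + 1 + k) ω) - φ (X' (kstar + 1 + k) ω)|
        ≤ |φ (X (kstar + 1 + k) ω)| + |φ (X' (kstar + 1 + k) ω)| := abs_sub _ _
      _ ≤ 2 * M' := by nlinarith
  -- a.e. the increments vanish after the meeting time
  have hzero : ∀ᵐ ω ∂P, ∀ k, τ ω ≤ kstar + 1 + k → Δ k ω = 0 := by
    filter_upwards [hfaithful] with ω hω k hkτ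
    simp [hΔdef, hω _ hkτ]
  -- bounded measurable composites are integrable
  have hφint : ∀ (Y : Ω → S), Measurable Y → Integrable (fun ω => φ (Y ω)) P := by
    intro Y hY
    refine ⟨(hφm.comp hY).aestronglyMeasurable, ?_⟩
    exact HasFiniteIntegral.of_bounded (C := M')
      (ae_of_all _ fun ω => by simpa [Real.norm_eq_abs] using hM' (Y ω))
  -- the geometric bound
  set b : ℝ := 2 * M' * C' * ρ ^ (kstar + 1) with hbdef
  have hb0 : 0 ≤ b := by positivity
  set B : ℕ → ℝ≥0∞ := fun k => ENNReal.ofReal (b * ρ ^ k) with hBdef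
  have hDle : ∀ k, ∫⁻ ω, ‖Δ k ω‖₊ ∂P ≤ B k := by
    intro k
    have h1 : ∀ᵐ ω ∂P, (‖Δ k ω‖₊ : ℝ≥0∞) ≤
        Set.indicator {ω | kstar + 1 + k < τ ω}
          (fun _ => ENNReal.ofReal (2 * M')) ω := by
      filter_upwards [hzero] with ω hω
      by_cases h : kstar + 1 + k < τ ω
      · have : (‖Δ k ω‖₊ : ℝ≥0∞) = ENNReal.ofReal ‖Δ k ω‖ :=
          (ofReal_norm_eq_enorm _).symm
        have hmem : ω ∈ {ω | kstar + 1 + k < τ ω} := h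
        rw [Set.indicator_of_mem hmem, this]
        exact ENNReal.ofReal_le_ofReal (hΔbd k ω)
      · have : Δ k ω = 0 := hω k (not_lt.mp h)
        simp [this]
    calc ∫⁻ ω, ‖Δ k ω‖₊ ∂P
        ≤ ∫⁻ ω, Set.indicator {ω | kstar + 1 + k < τ ω}
            (fun _ => ENNReal.ofReal (2 * M')) ω ∂P := lintegral_mono_ae h1
      _ ≤ ENNReal.ofReal (2 * M') * P {ω | kstar + 1 + k < τ ω} :=
          lintegral_indicator_const_le _ _
      _ ≤ ENNReal.ofReal (2 * M') * ENNReal.ofReal (C * ρ ^ (kstar + 1 + k)) := by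
          exact mul_le_mul_right (htail _) _
      _ ≤ ENNReal.ofReal (2 * M') * ENNReal.ofReal (C' * ρ ^ (kstar + 1 + k)) := by
          refine mul_le_mul_right (ENNReal.ofReal_le_ofReal ?_) _
          have : (0:ℝ) ≤ ρ ^ (kstar + 1 + k) := by positivity
          exact mul_le_mul_of_nonneg_right (le_max_left _ _) this
      _ = B k := by
          rw [hBdef, ← ENNReal.ofReal_mul (by positivity)]
          congr 1
          rw [hbdef, pow_add]
          ring
  have hgeo : Summable (fun k : ℕ => b * ρ ^ k) :=
    (summable_geometric_of_lt_one hρ0 hρ1).mul_left b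
  have hBsum : ∑' k, B k ≠ ∞ := by
    rw [hBdef]
    rw [← ENNReal.ofReal_tsum_of_nonneg (fun k => by positivity) hgeo]
    exact ENNReal.ofReal_ne_top
  have hDsum : ∑' k, ∫⁻ ω, ‖Δ k ω‖₊ ∂P ≠ ∞ :=
    fun h => hBsum (top_le_iff.mp (h ▸ ENNReal.tsum_le_tsum hDle))
  have hΔint : ∀ k, Integrable (Δ k) P := fun k =>
    ⟨(hΔm k).aestronglyMeasurable,
      lt_of_le_of_lt (le_of_eq rfl) (lt_of_le_of_lt (hDle k) ENNReal.ofReal_lt_top)⟩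
  -- real norm integrals bounded by the geometric sequence
  have hnormle : ∀ k, ∫ ω, ‖Δ k ω‖ ∂P ≤ b * ρ ^ k := by
    intro k
    have h1 : ENNReal.ofReal (∫ ω, ‖Δ k ω‖ ∂P) = ∫⁻ ω, ‖Δ k ω‖₊ ∂P :=
      ofReal_integral_norm_eq_lintegral_enorm (hΔint k)
    have h2 : ENNReal.ofReal (∫ ω, ‖Δ k ω‖ ∂P) ≤ ENNReal.ofReal (b * ρ ^ k) := by
      rw [h1]; exact hDle k
    exact (ENNReal.ofReal_le_ofReal_iff (by positivity)).mp h2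
  have hnormsum : Summable (fun k => ∫ ω, ‖Δ k ω‖ ∂P) := by
    refine Summable.of_nonneg_of_le (fun k => ?_) hnormle hgeo
    exact integral_nonneg (fun ω => norm_nonneg _)
  -- the integrals of the increments
  set a : ℕ → ℝ := fun k => ∫ ω, Δ k ω ∂P with hadef
  have hasummable : Summable a := by
    refine Summable.of_norm_bounded hnormsum (fun k => ?_)
    exact norm_integral_le_integral_norm _
  set f : ℕ → ℝ := fun n => ∫ ω, φ (X (kstar + n) ω) ∂P with hfdef
  have hak : ∀ k, a k = f (k + 1) - f k := by
    intro k
    have hj : 1 ≤ kstar + 1 + k := by omega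
    have hident' : IdentDistrib (X' (kstar + 1 + k)) (X (kstar + k)) P P := by
      have := hident (kstar + 1 + k) hj
      have heq : kstar + 1 + k - 1 = kstar + k := by omega
      rwa [heq] at this
    have h2 : ∫ ω, φ (X' (kstar + 1 + k) ω) ∂P = ∫ ω, φ (X (kstar + k) ω) ∂P :=
      (hident'.comp hφm).integral_eq
    have h3 : kstar + 1 + k = kstar + (k + 1) := by omega
    rw [hadef]
    simp only [hΔdef]
    rw [integral_sub (hφint _ (hXm _)) (hφint _ (hX'm _)), h2, hfdef]
    rw [h3]
  have hpartial : ∀ n, ∑ k ∈ Finset.range n, a k = f n - f 0 := by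
    intro n
    calc ∑ k ∈ Finset.range n, a k = ∑ k ∈ Finset.range n, (f (k + 1) - f k) :=
          Finset.sum_congr rfl (fun k _ => hak k)
      _ = f n - f 0 := Finset.sum_range_sub f n
  have hflim : Tendsto f atTop (nhds (∫ s, φ s ∂π)) := by
    have h1 : Tendsto (fun n : ℕ => kstar + n) atTop atTop := by
      simpa [add_comm] using tendsto_add_atTop_nat kstar
    exact hconv.comp h1
  have htsum : ∑' k, a k = (∫ s, φ s ∂π) - f 0 := by
    have h1 : Tendsto (fun n => ∑ k ∈ Finset.range n, a k) atTop
        (nhds (∑' k, a k)) := hasummable.hasSum.tendsto_sum_nat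
    have h2 : Tendsto (fun n => ∑ k ∈ Finset.range n, a k) atTop
        (nhds ((∫ s, φ s ∂π) - f 0)) := by
      simp only [hpartial]
      exact hflim.sub_const (f 0)
    exact tendsto_nhds_unique h1 h2
  -- the estimator a.e. equals `φ(X kstar) + ∑' Δ`
  set g : Ω → ℝ := fun ω => ∑' k, Δ k ω with hgdef
  have hae : ∀ᵐ ω ∂P,
      φ (X kstar ω) + ∑ k ∈ Finset.Ico (kstar + 1) (τ ω), (φ (X k ω) - φ (X' k ω))
        = φ (X kstar ω) + g ω := by
    filter_upwards [hzero] with ω hω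
    congr 1
    have hvanish : ∀ k ∉ Finset.range (τ ω - (kstar + 1)), Δ k ω = 0 := by
      intro k hkk
      apply hω
      simp only [Finset.mem_range, not_lt] at hkk
      omega
    have hgω : g ω = ∑' k, Δ k ω := rfl
    rw [hgω, tsum_eq_sum hvanish, Finset.sum_Ico_eq_sum_range]
  -- integrability of g
  have hsummable_ae : ∀ᵐ ω ∂P, Summable (fun k => Δ k ω) := by
    filter_upwards [hzero] with ω hω
    refine summable_of_ne_finset_zero (s := Finset.range (τ ω)) (fun k hkk => ?_)
    apply hω
    simp only [Finset.mem_range, not_lt] at hkk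
    omega
  have hgmeas : AEStronglyMeasurable g P := by
    refine aestronglyMeasurable_of_tendsto_ae (ι := ℕ) atTop
      (f := fun n ω => ∑ k ∈ Finset.range n, Δ k ω) ?_ ?_
    · intro n
      exact (Finset.measurable_sum _ (fun k _ => hΔm k)).aestronglyMeasurable
    · filter_upwards [hsummable_ae] with ω hω
      exact hω.hasSum.tendsto_sum_nat
  have hgfin : HasFiniteIntegral g P := by
    have h1 : ∀ᵐ ω ∂P, (‖g ω‖₊ : ℝ≥0∞) ≤ ∑' k, (‖Δ k ω‖₊ : ℝ≥0∞) := by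
      filter_upwards [hzero] with ω hω
      have hsupp : ∀ k ∉ Finset.range (τ ω), ‖Δ k ω‖₊ = 0 := by
        intro k hkk
        simp only [Finset.mem_range, not_lt] at hkk
        simp [hω k (by omega)]
      have hs : Summable (fun k => ‖Δ k ω‖₊) := summable_of_ne_finset_zero hsupp
      calc (‖g ω‖₊ : ℝ≥0∞) ≤ ((∑' k, ‖Δ k ω‖₊ : NNReal) : ℝ≥0∞) := by
            exact_mod_cast nnnorm_tsum_le hs
        _ = ∑' k, (‖Δ k ω‖₊ : ℝ≥0∞) := ENNReal.coe_tsum hs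
    calc ∫⁻ ω, ‖g ω‖₊ ∂P ≤ ∫⁻ ω, ∑' k, (‖Δ k ω‖₊ : ℝ≥0∞) ∂P := lintegral_mono_ae h1
      _ = ∑' k, ∫⁻ ω, ‖Δ k ω‖₊ ∂P :=
          lintegral_tsum (fun k => (hΔm k).nnnorm.coe_nnreal_ennreal.aemeasurable)
      _ < ∞ := hDsum.lt_top
  have hgint : Integrable g P := ⟨hgmeas, hgfin⟩
  have hXint : Integrable (fun ω => φ (X kstar ω)) P := hφint _ (hXm kstar)
  constructor
  · exact (hXint.add hgint).congr (hae.mono (fun ω h => h.symm))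
  · rw [integral_congr_ae hae, integral_add hXint hgint]
    have hginteq : ∫ ω, g ω ∂P = ∑' k, a k := by
      rw [hgdef]
      exact integral_tsum (fun k => (hΔm k).aestronglyMeasurable) hDsum
    rw [hginteq, htsum]
    have hf0 : f 0 = ∫ ω, φ (X kstar ω) ∂P := by simp [hfdef]
    rw [hf0]
    ring
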